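/- arXiv:1903.07034 — 2 statements merged into one kernel-verified Lean document; each statement's English description precedes it below -/
import Mathlib

section
/- Let ζ ∈ ℂⁿ satisfy ζ ⊙ ζ = 0, let γ : ℝⁿ → ℝ be smooth with γ > 0 everywhere, set q := Δ(γ^{1/2})/γ^{1/2}, and let r : ℝⁿ → ℂ be a smooth solution of Δr + 2 ζ ⊙ ∇r − q r = q on ℝⁿ. Then the complex geometric optics function u(x) := e^{ζ·x} γ(x)^{−1/2} (1 + r(x)) satisfies the conductivity equation ∇·(γ ∇u) = 0 on ℝⁿ. -/
open scoped BigOperators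

noncomputable section

/-- Partial derivative in the j-th coordinate direction. -/
noncomputable def pd {n : ℕ} {E : Type*} [NormedAddCommGroup E] [NormedSpace ℝ E]
    (j : Fin n) (f : (Fin n → ℝ) → E) (x : Fin n → ℝ) : E :=
  fderiv ℝ f x (Pi.single j 1)

/-- Laplacian: sum of second partial derivatives. -/
noncomputable def lap {n : ℕ} {E : Type*} [NormedAddCommGroup E] [NormedSpace ℝ E]
    (f : (Fin n → ℝ) → E) (x : Fin n → ℝ) : E :=
  ∑ j, pd j (fun y => pd j f y) x

variable {n : ℕ}


lemma contDiff_pd (j : Fin n) {E : Type*} [NormedAddCommGroup E] [NormedSpace ℝ E]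
    {f : (Fin n → ℝ) → E} (hf : ContDiff ℝ (⊤:ℕ∞) f) : ContDiff ℝ (⊤:ℕ∞) (pd j f) := by
  have h := hf.fderiv_right (m := (⊤:ℕ∞)) (by exact_mod_cast (by exact_mod_cast le_top))
  exact h.clm_apply contDiff_const

lemma pd_mul (j : Fin n) {f g : (Fin n → ℝ) → ℂ} {x : Fin n → ℝ}
    (hf : DifferentiableAt ℝ f x) (hg : DifferentiableAt ℝ g x) :
    pd j (fun y => f y * g y) x = pd j f x * g x + f x * pd j g x := by
  unfold pd
  rw [fderiv_fun_mul hf hg]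
  simp only [ContinuousLinearMap.add_apply, ContinuousLinearMap.smul_apply, smul_eq_mul]
  ring

lemma pd_ofReal (j : Fin n) {f : (Fin n → ℝ) → ℝ} {x : Fin n → ℝ}
    (hf : DifferentiableAt ℝ f x) :
    pd j (fun y => ((f y : ℝ) : ℂ)) x = ((pd j f x : ℝ) : ℂ) := by
  unfold pd
  have : fderiv ℝ (fun y => ((f y : ℝ) : ℂ)) x = Complex.ofRealCLM.comp (fderiv ℝ f x) :=
    (Complex.ofRealCLM.hasFDerivAt.comp x hf.hasFDerivAt).fderiv
  rw [this]; rfl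

lemma pd_const_add (j : Fin n) (c : ℂ) {f : (Fin n → ℝ) → ℂ} {x : Fin n → ℝ}
    (hf : DifferentiableAt ℝ f x) :
    pd j (fun y => c + f y) x = pd j f x := by
  unfold pd
  rw [fderiv_const_add]

lemma pd_inv (j : Fin n) {f : (Fin n → ℝ) → ℂ} {x : Fin n → ℝ}
    (hf : DifferentiableAt ℝ f x) (hx : f x ≠ 0) :
    pd j (fun y => (f y)⁻¹) x = -(pd j f x / (f x)^2) := by
  unfold pd
  have h := ((hasFDerivAt_inv' (𝕜 := ℝ) hx).comp x hf.hasFDerivAt).fderiv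
  rw [show (fun y => (f y)⁻¹) = Inv.inv ∘ f from rfl, h]
  simp only [ContinuousLinearMap.comp_apply, ContinuousLinearMap.neg_apply,
    ContinuousLinearMap.mulLeftRight_apply]
  rw [div_eq_mul_inv, sq, mul_inv]
  ring

lemma pd_exp (j : Fin n) (ζ : Fin n → ℂ) (x : Fin n → ℝ) :
    pd j (fun y => Complex.exp (∑ i, ζ i * (y i : ℂ))) x
      = ζ j * Complex.exp (∑ i, ζ i * (x i : ℂ)) := by
  classical
  set L : (Fin n → ℝ) →L[ℝ] ℂ :=
    ∑ i, ζ i • (Complex.ofRealCLM.comp (ContinuousLinearMap.proj i)) with hL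
  have hLapp : ∀ y : Fin n → ℝ, L y = ∑ i, ζ i * (y i : ℂ) := by
    intro y
    simp [hL, ContinuousLinearMap.sum_apply, smul_eq_mul]
  have hfun : (fun y : Fin n → ℝ => Complex.exp (∑ i, ζ i * (y i : ℂ)))
      = Complex.exp ∘ L := by
    funext y; simp [Function.comp, hLapp y]
  have h1 : HasFDerivAt (Complex.exp ∘ (L : (Fin n → ℝ) → ℂ)) (Complex.exp (L x) • L) x :=
    (Complex.hasDerivAt_exp (L x)).comp_hasFDerivAt x L.hasFDerivAt
  have hsingle : L (Pi.single j 1) = ζ j := by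
    rw [hLapp]
    rw [Finset.sum_eq_single j]
    · simp
    · intro i _ hij; simp [Pi.single_apply, hij]
    · simp
  rw [pd, hfun, h1.fderiv]
  simp only [ContinuousLinearMap.smul_apply, hsingle, smul_eq_mul, hLapp x]
  ring

lemma pd_add (j : Fin n) {f g : (Fin n → ℝ) → ℂ} {x : Fin n → ℝ}
    (hf : DifferentiableAt ℝ f x) (hg : DifferentiableAt ℝ g x) :
    pd j (fun y => f y + g y) x = pd j f x + pd j g x := by
  unfold pd; rw [fderiv_fun_add hf hg]; rfl

lemma pd_sub (j : Fin n) {f g : (Fin n → ℝ) → ℂ} {x : Fin n → ℝ}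
    (hf : DifferentiableAt ℝ f x) (hg : DifferentiableAt ℝ g x) :
    pd j (fun y => f y - g y) x = pd j f x - pd j g x := by
  unfold pd; rw [fderiv_fun_sub hf hg]; rfl

lemma pd_const_mul (j : Fin n) (c : ℂ) {f : (Fin n → ℝ) → ℂ} {x : Fin n → ℝ}
    (hf : DifferentiableAt ℝ f x) :
    pd j (fun y => c * f y) x = c * pd j f x := by
  rw [pd_mul j (differentiableAt_const c) hf]
  simp [pd, fderiv_const]


theorem stmt_5 {n : ℕ} (ζ : Fin n → ℂ) (hζ : ∑ j, ζ j * ζ j = 0)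
    (γ : (Fin n → ℝ) → ℝ) (hγ : ContDiff ℝ (⊤ : ℕ∞) γ) (hγpos : ∀ x, 0 < γ x)
    (q : (Fin n → ℝ) → ℝ)
    (hq : ∀ x, q x = lap (fun y => Real.sqrt (γ y)) x / Real.sqrt (γ x))
    (r : (Fin n → ℝ) → ℂ) (hr : ContDiff ℝ (⊤ : ℕ∞) r)
    (hreq : ∀ x, lap r x + 2 * ∑ j, ζ j * pd j r x - (q x : ℂ) * r x = (q x : ℂ))
    (u : (Fin n → ℝ) → ℂ)
    (hu : ∀ x, u x = Complex.exp (∑ j, ζ j * (x j : ℂ)) * ((Real.sqrt (γ x) : ℂ))⁻¹ * (1 + r x)) :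
    ∀ x, (∑ j, pd j (fun y => (γ y : ℂ) * pd j u y) x) = 0 := by
  classical
  intro x
  set s : (Fin n → ℝ) → ℝ := fun y => Real.sqrt (γ y) with hsdef
  have hspos : ∀ y, 0 < s y := fun y => Real.sqrt_pos.2 (hγpos y)
  have hs : ContDiff ℝ (⊤:ℕ∞) s := hγ.sqrt (fun y => (hγpos y).ne')
  set sC : (Fin n → ℝ) → ℂ := fun y => ((s y : ℝ) : ℂ) with hsCdef
  have hsC : ContDiff ℝ (⊤:ℕ∞) sC := Complex.ofRealCLM.contDiff.comp hs
  have hsne : ∀ y, sC y ≠ 0 := fun y => by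
    simp only [hsCdef, ne_eq, Complex.ofReal_eq_zero]
    exact (hspos y).ne'
  set E : (Fin n → ℝ) → ℂ := fun y => Complex.exp (∑ i, ζ i * (y i : ℂ)) with hEdef
  have hE : ContDiff ℝ (⊤:ℕ∞) E := by
    rw [hEdef]
    apply Complex.contDiff_exp.comp
    apply ContDiff.sum
    intro i _
    exact contDiff_const.mul (Complex.ofRealCLM.contDiff.comp
      (ContinuousLinearMap.proj i : (Fin n → ℝ) →L[ℝ] ℝ).contDiff)
  have hEpd : ∀ (j : Fin n) y, pd j E y = ζ j * E y := fun j y => pd_exp j ζ y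
  set v : (Fin n → ℝ) → ℂ := fun y => 1 + r y with hvdef
  have hv : ContDiff ℝ (⊤:ℕ∞) v := contDiff_const.add hr
  have hvpd : ∀ (j : Fin n) y, pd j v y = pd j r y := fun j y =>
    pd_const_add j 1 (hr.differentiable (by simp) y)
  have hufun : u = fun y => E y * (sC y)⁻¹ * v y := funext hu
  -- differentiability facts
  have dE : ∀ y, DifferentiableAt ℝ E y := fun y => (hE.differentiable (by simp)) y
  have dsC : ∀ y, DifferentiableAt ℝ sC y := fun y => (hsC.differentiable (by simp)) y
  have ds : ∀ y, DifferentiableAt ℝ s y := fun y => (hs.differentiable (by simp)) y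
  have dv : ∀ y, DifferentiableAt ℝ v y := fun y => (hv.differentiable (by simp)) y
  have dr : ∀ y, DifferentiableAt ℝ r y := fun y => (hr.differentiable (by simp)) y
  have dinv : ∀ y, DifferentiableAt ℝ (fun z => (sC z)⁻¹) y :=
    fun y => (dsC y).inv (hsne y)
  have dpdsC : ∀ (j : Fin n) y, DifferentiableAt ℝ (pd j sC) y :=
    fun j y => ((contDiff_pd j hsC).differentiable (by simp)) y
  have dpdr : ∀ (j : Fin n) y, DifferentiableAt ℝ (pd j r) y :=
    fun j y => ((contDiff_pd j hr).differentiable (by simp)) y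
  have hγC : ∀ y, (γ y : ℂ) = sC y * sC y := by
    intro y
    have h1 : s y * s y = γ y := Real.mul_self_sqrt (hγpos y).le
    rw [hsCdef, ← h1]
    push_cast
    ring
  -- the first-order identity
  have key : ∀ j : Fin n, (fun y => (γ y : ℂ) * pd j u y)
      = fun y => E y * (ζ j * sC y * v y - pd j sC y * v y + sC y * pd j r y) := by
    intro j
    funext y
    rw [hufun]
    rw [pd_mul j ((dE y).fun_mul (dinv y)) (dv y)]
    rw [pd_mul j (dE y) (dinv y)]
    rw [pd_inv j (dsC y) (hsne y)]
    rw [hEpd j y, hvpd j y, hγC y]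
    field_simp [hsne y]
    ring
  -- second-order identity at x
  have main_j : ∀ j : Fin n, pd j (fun y => (γ y : ℂ) * pd j u y) x
      = E x * sC x * v x * (ζ j * ζ j) + (2 * E x * sC x) * (ζ j * pd j r x)
        - (E x * v x) * pd j (pd j sC) x + (E x * sC x) * pd j (pd j r) x := by
    intro j
    rw [key j]
    have d1 : DifferentiableAt ℝ (fun y => ζ j * sC y) x :=
      (differentiableAt_const _).mul (dsC x)
    have d2 : DifferentiableAt ℝ (fun y => ζ j * sC y * v y) x := d1.mul (dv x)
    have d3 : DifferentiableAt ℝ (fun y => pd j sC y * v y) x := (dpdsC j x).mul (dv x)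
    have d4 : DifferentiableAt ℝ (fun y => sC y * pd j r y) x := (dsC x).mul (dpdr j x)
    rw [pd_mul j (dE x) ((d2.fun_sub d3).fun_add d4)]
    rw [pd_add j (d2.fun_sub d3) d4]
    rw [pd_sub j d2 d3]
    rw [pd_mul j d1 (dv x)]
    rw [pd_const_mul j (ζ j) (dsC x)]
    rw [pd_mul j (dpdsC j x) (dv x)]
    rw [pd_mul j (dsC x) (dpdr j x)]
    rw [hEpd j x, hvpd j x]
    ring
  -- sum up
  rw [Finset.sum_congr rfl (fun j _ => main_j j)]
  have hSsum : ∑ j, pd j (pd j sC) x = ((lap s x : ℝ) : ℂ) := by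
    have h1 : ∀ j : Fin n, pd j (pd j sC) x = ((pd j (pd j s) x : ℝ) : ℂ) := by
      intro j
      have h2 : pd j sC = fun y => ((pd j s y : ℝ) : ℂ) :=
        funext fun y => pd_ofReal j (ds y)
      rw [h2]
      exact pd_ofReal j (((contDiff_pd j hs).differentiable (by simp)) x)
    rw [Finset.sum_congr rfl (fun j _ => h1 j), lap]
    push_cast
    rfl
  have hlaps : lap s x = q x * s x := by
    rw [hq x]
    show lap s x = lap s x / s x * s x
    rw [div_mul_cancel₀ _ (hspos x).ne']
  have hlapr : ∑ j, pd j (pd j r) x = lap r x := rfl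
  rw [Finset.sum_add_distrib, Finset.sum_sub_distrib, Finset.sum_add_distrib,
    ← Finset.mul_sum, ← Finset.mul_sum, ← Finset.mul_sum, ← Finset.mul_sum,
    hSsum, hζ, hlaps, hlapr]
  simp only [hvdef, hsCdef]
  push_cast
  linear_combination (E x * ((s x : ℝ) : ℂ)) * (hreq x)
end
end

section
/- Let n ≥ 3, let γ : ℝⁿ → ℝ be smooth with γ(x) ≥ c for some constant c > 0 and with γ − 1 compactly supported, and set q := Δ(γ^{1/2})/γ^{1/2}. If f : ℝⁿ → ℝ is smooth, compactly supported, and satisfies Δf(x) − 3 q(x) f(x) = 0 for every x ∈ ℝⁿ, then f = 0 identically. -/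
open scoped BigOperators

noncomputable section

open MeasureTheory

namespace Stmt10Aux

variable {n : ℕ}

lemma contDiff_pd {f : (Fin n → ℝ) → ℝ} (hf : ContDiff ℝ (⊤ : ℕ∞) f) (j : Fin n) :
    ContDiff ℝ (⊤ : ℕ∞) (pd j f) := by
  have h : ContDiff ℝ (⊤ : ℕ∞) (fderiv ℝ f) := hf.fderiv_right (le_refl _)
  exact h.clm_apply contDiff_const

lemma continuous_pd {f : (Fin n → ℝ) → ℝ} (hf : ContDiff ℝ (⊤ : ℕ∞) f) (j : Fin n) :
    Continuous (pd j f) := (contDiff_pd hf j).continuous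

lemma hasCompactSupport_pd {f : (Fin n → ℝ) → ℝ} (hf : HasCompactSupport f) (j : Fin n) :
    HasCompactSupport (pd j f) := hf.fderiv_apply ℝ (Pi.single j 1)

lemma pd_mul {g h : (Fin n → ℝ) → ℝ} {x : Fin n → ℝ} (hg : DifferentiableAt ℝ g x)
    (hh : DifferentiableAt ℝ h x) (j : Fin n) :
    pd j (fun y => g y * h y) x = pd j g x * h x + g x * pd j h x := by
  unfold pd
  rw [fderiv_fun_mul hg hh]
  simp [mul_comm, add_comm]

lemma pd_exp {g : (Fin n → ℝ) → ℝ} {x : Fin n → ℝ} (hg : DifferentiableAt ℝ g x) (j : Fin n) :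
    pd j (fun y => Real.exp (g y)) x = Real.exp (g x) * pd j g x := by
  unfold pd
  rw [fderiv_exp hg]
  simp

lemma pd_add {g h : (Fin n → ℝ) → ℝ} {x : Fin n → ℝ} (hg : DifferentiableAt ℝ g x)
    (hh : DifferentiableAt ℝ h x) (j : Fin n) :
    pd j (fun y => g y + h y) x = pd j g x + pd j h x := by
  unfold pd
  rw [fderiv_fun_add hg hh]
  simp

lemma pd_const (c : ℝ) (x : Fin n → ℝ) (j : Fin n) :
    pd j (fun _ => c) x = 0 := by
  unfold pd
  rw [fderiv_const_apply]
  simp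

lemma pd_const_mul {g : (Fin n → ℝ) → ℝ} {x : Fin n → ℝ} (hg : DifferentiableAt ℝ g x)
    (c : ℝ) (j : Fin n) :
    pd j (fun y => c * g y) x = c * pd j g x := by
  unfold pd
  rw [fderiv_const_mul hg]
  simp

lemma pd_coord (i j : Fin n) (x : Fin n → ℝ) :
    pd j (fun y : Fin n → ℝ => y i) x = (if i = j then (1:ℝ) else 0) := by
  unfold pd
  have : (fun y : Fin n → ℝ => y i) = fun y => (ContinuousLinearMap.proj (R := ℝ)
      (φ := fun _ : Fin n => ℝ) i) y := rfl
  rw [this, ContinuousLinearMap.fderiv]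
  simp [Pi.single_apply]

lemma differentiableAt_coord (i : Fin n) (x : Fin n → ℝ) :
    DifferentiableAt ℝ (fun y : Fin n → ℝ => y i) x := by
  have : (fun y : Fin n → ℝ => y i) = fun y => (ContinuousLinearMap.proj (R := ℝ)
      (φ := fun _ : Fin n => ℝ) i) y := rfl
  rw [this]
  exact (ContinuousLinearMap.proj (R := ℝ) (φ := fun _ : Fin n => ℝ) i).differentiableAt

lemma pd_comm {f : (Fin n → ℝ) → ℝ} (hf : ContDiff ℝ (⊤ : ℕ∞) f) (i j : Fin n)
    (x : Fin n → ℝ) : pd i (pd j f) x = pd j (pd i f) x := by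
  have hd : ContDiff ℝ (⊤ : ℕ∞) (fderiv ℝ f) := hf.fderiv_right (le_refl _)
  have h1 : ∀ (u w : Fin n → ℝ), fderiv ℝ (fderiv ℝ f) x u w = fderiv ℝ (fderiv ℝ f) x w u := by
    intro u w
    exact second_derivative_symmetric (fun y => (hf.differentiable (by simp) y).hasFDerivAt)
      ((hd.differentiable (by simp) x).hasFDerivAt) u w
  have key : ∀ (k : Fin n) (w : Fin n → ℝ),
      pd k (fun y => fderiv ℝ f y w) x = fderiv ℝ (fderiv ℝ f) x (Pi.single k 1) w := by
    intro k w
    unfold pd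
    rw [fderiv_clm_apply (hd.differentiable (by simp) x) (differentiableAt_const w)]
    simp
  show pd i (fun y => fderiv ℝ f y (Pi.single j 1)) x
      = pd j (fun y => fderiv ℝ f y (Pi.single i 1)) x
  rw [key i (Pi.single j 1), key j (Pi.single i 1), h1]


lemma tsupport_pd_subset {f : (Fin n → ℝ) → ℝ} (j : Fin n) :
    tsupport (pd j f) ⊆ tsupport f := by
  apply closure_minimal _ isClosed_closure
  intro x hx
  have h1 : x ∈ Function.support (fderiv ℝ f) := by
    intro h0
    apply hx
    show pd j f x = 0
    unfold pd
    rw [h0]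
    rfl
  exact support_fderiv_subset ℝ h1

lemma pd_zero_of_nmem_tsupport {f : (Fin n → ℝ) → ℝ} {j : Fin n} {x : Fin n → ℝ}
    (hx : x ∉ tsupport f) : pd j f x = 0 := by
  by_contra h
  exact hx (tsupport_pd_subset j (subset_closure h))

lemma lap_zero_of_nmem_tsupport {f : (Fin n → ℝ) → ℝ} {x : Fin n → ℝ}
    (hx : x ∉ tsupport f) : lap f x = 0 := by
  unfold lap
  apply Finset.sum_eq_zero
  intro j _
  exact pd_zero_of_nmem_tsupport (fun h => hx (tsupport_pd_subset j h))

lemma hasCompactSupport_lap {f : (Fin n → ℝ) → ℝ} (hf : HasCompactSupport f) :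
    HasCompactSupport (lap f) := by
  apply hf.mono'
  intro x hx
  by_contra h
  exact hx (lap_zero_of_nmem_tsupport h)

lemma continuous_lap {f : (Fin n → ℝ) → ℝ} (hf : ContDiff ℝ (⊤ : ℕ∞) f) :
    Continuous (lap f) := by
  unfold lap
  apply continuous_finset_sum
  intro j _
  exact continuous_pd (contDiff_pd hf j) j

lemma integ_cs {g : (Fin n → ℝ) → ℝ} (hg : Continuous g) (hgc : HasCompactSupport g) :
    Integrable g (volume : Measure (Fin n → ℝ)) :=
  hg.integrable_of_hasCompactSupport hgc

lemma ibp {F G : (Fin n → ℝ) → ℝ} (hF : ContDiff ℝ (⊤ : ℕ∞) F) (hG : ContDiff ℝ (⊤ : ℕ∞) G)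
    (hFc : HasCompactSupport F) (j : Fin n) :
    ∫ x, F x * pd j G x = - ∫ x, pd j F x * G x := by
  have h1 : Integrable (fun x => pd j F x * G x) (volume : Measure (Fin n → ℝ)) :=
    integ_cs ((continuous_pd hF j).mul hG.continuous) ((hasCompactSupport_pd hFc j).mul_right)
  have h2 : Integrable (fun x => F x * pd j G x) (volume : Measure (Fin n → ℝ)) :=
    integ_cs (hF.continuous.mul (continuous_pd hG j)) (hFc.mul_right)
  have h3 : Integrable (fun x => F x * G x) (volume : Measure (Fin n → ℝ)) :=
    integ_cs (hF.continuous.mul hG.continuous) (hFc.mul_right)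
  exact integral_mul_fderiv_eq_neg_fderiv_mul_of_integrable h1 h2 h3
    (fun x _ => hF.differentiable (by simp) x) (fun x _ => hG.differentiable (by simp) x)

lemma ibp_self {v : (Fin n → ℝ) → ℝ} (hv : ContDiff ℝ (⊤ : ℕ∞) v)
    (hvc : HasCompactSupport v) (j : Fin n) :
    ∫ x, v x * pd j (pd j v) x = - ∫ x, (pd j v x)^2 := by
  have := ibp hv (contDiff_pd hv j) hvc j
  rw [this]
  congr 1
  apply integral_congr_ae
  filter_upwards with x
  ring


section Weight

variable {n : ℕ} (i0 : Fin n) (ε τ : ℝ)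

/-- the function `a x = 1 + ε x_{i0}` -/
def aF : (Fin n → ℝ) → ℝ := fun x => 1 + ε * x i0

/-- the weight exponent `φ x = x_{i0} + (ε/2) x_{i0}^2` -/
def phiF : (Fin n → ℝ) → ℝ := fun x => x i0 + ε/2 * (x i0 * x i0)

/-- the weight `e^{τ φ}` -/
def EF : (Fin n → ℝ) → ℝ := fun x => Real.exp (τ * phiF i0 ε x)

lemma contDiff_coord : ContDiff ℝ (⊤ : ℕ∞) (fun y : Fin n → ℝ => y i0) :=
  (ContinuousLinearMap.proj (R := ℝ) (φ := fun _ : Fin n => ℝ) i0).contDiff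

lemma contDiff_aF : ContDiff ℝ (⊤ : ℕ∞) (aF i0 ε) :=
  contDiff_const.add (contDiff_const.mul (contDiff_coord i0))

lemma contDiff_phiF : ContDiff ℝ (⊤ : ℕ∞) (phiF i0 ε) :=
  (contDiff_coord i0).add (contDiff_const.mul ((contDiff_coord i0).mul (contDiff_coord i0)))

lemma contDiff_EF : ContDiff ℝ (⊤ : ℕ∞) (EF i0 ε τ) :=
  Real.contDiff_exp.comp (contDiff_const.mul (contDiff_phiF i0 ε))

lemma EF_pos (x : Fin n → ℝ) : 0 < EF i0 ε τ x := Real.exp_pos _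

lemma pd_aF (j : Fin n) (x : Fin n → ℝ) :
    pd j (aF i0 ε) x = if i0 = j then ε else 0 := by
  unfold aF
  rw [pd_add (differentiableAt_const _) ((differentiableAt_coord i0 x).const_mul ε) j,
    pd_const, pd_const_mul (differentiableAt_coord i0 x) ε j, pd_coord]
  by_cases h : i0 = j <;> simp [h]

lemma pd_phiF (j : Fin n) (x : Fin n → ℝ) :
    pd j (phiF i0 ε) x = if i0 = j then aF i0 ε x else 0 := by
  unfold phiF
  have hd := differentiableAt_coord (n := n) i0 x
  rw [pd_add hd ((hd.fun_mul hd).const_mul _) j,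
    pd_const_mul (hd.fun_mul hd) _ j, pd_mul hd hd j, pd_coord]
  by_cases h : i0 = j <;> simp [h, aF] <;> ring

lemma pd_EF (j : Fin n) (x : Fin n → ℝ) :
    pd j (EF i0 ε τ) x = (if i0 = j then τ * aF i0 ε x * EF i0 ε τ x else 0) := by
  unfold EF
  have hd : DifferentiableAt ℝ (fun y => τ * phiF i0 ε y) x :=
    ((contDiff_phiF i0 ε).differentiable (by simp) x).const_mul τ
  rw [pd_exp hd j, pd_const_mul ((contDiff_phiF i0 ε).differentiable (by simp) x) τ j,
    pd_phiF]
  by_cases h : i0 = j <;> simp [h] <;> ring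

lemma pd_aF_cube (j : Fin n) (x : Fin n → ℝ) :
    pd j (fun y => aF i0 ε y * aF i0 ε y * aF i0 ε y) x
      = if i0 = j then 3*ε*(aF i0 ε x * aF i0 ε x) else 0 := by
  have hda : DifferentiableAt ℝ (aF i0 ε) x := (contDiff_aF i0 ε).differentiable (by simp) x
  rw [pd_mul (hda.fun_mul hda) hda j, pd_mul hda hda j, pd_aF]
  by_cases h : i0 = j <;> simp [h] <;> ring

end Weight

section Conjugate

variable {n : ℕ} (i0 : Fin n) (ε τ : ℝ) (f : (Fin n → ℝ) → ℝ)

/-- the conjugated function `v = e^{τφ} f` -/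
def vF : (Fin n → ℝ) → ℝ := fun x => EF i0 ε τ x * f x

variable {f}

lemma contDiff_vF (hf : ContDiff ℝ (⊤ : ℕ∞) f) : ContDiff ℝ (⊤ : ℕ∞) (vF i0 ε τ f) :=
  (contDiff_EF i0 ε τ).mul hf

lemma hasCompactSupport_vF (hfc : HasCompactSupport f) :
    HasCompactSupport (vF i0 ε τ f) := hfc.mul_left

lemma pd_vF (hf : ContDiff ℝ (⊤ : ℕ∞) f) (j : Fin n) (x : Fin n → ℝ) :
    pd j (vF i0 ε τ f) x
      = (if i0 = j then τ * aF i0 ε x * vF i0 ε τ f x else 0) + EF i0 ε τ x * pd j f x := by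
  unfold vF
  rw [pd_mul ((contDiff_EF i0 ε τ).differentiable (by simp) x)
    (hf.differentiable (by simp) x) j, pd_EF]
  by_cases h : i0 = j <;> simp [h, vF] <;> ring

lemma pd_pd_vF_ne (hf : ContDiff ℝ (⊤ : ℕ∞) f) (j : Fin n) (hj : ¬ (i0 = j)) (x : Fin n → ℝ) :
    pd j (pd j (vF i0 ε τ f)) x = EF i0 ε τ x * pd j (pd j f) x := by
  have h1 : pd j (vF i0 ε τ f) = fun y => EF i0 ε τ y * pd j f y := by
    funext y
    rw [pd_vF i0 ε τ hf j y]
    simp [hj]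
  rw [h1, pd_mul ((contDiff_EF i0 ε τ).differentiable (by simp) x)
    ((contDiff_pd hf j).differentiable (by simp) x) j, pd_EF]
  simp [hj]

lemma pd_pd_vF_eq (hf : ContDiff ℝ (⊤ : ℕ∞) f) (x : Fin n → ℝ) :
    pd i0 (pd i0 (vF i0 ε τ f)) x
      = τ * ε * vF i0 ε τ f x + τ * aF i0 ε x * pd i0 (vF i0 ε τ f) x
        + τ * aF i0 ε x * EF i0 ε τ x * pd i0 f x + EF i0 ε τ x * pd i0 (pd i0 f) x := by
  have h1 : pd i0 (vF i0 ε τ f)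
      = fun y => τ * (aF i0 ε y * vF i0 ε τ f y) + EF i0 ε τ y * pd i0 f y := by
    funext y
    rw [pd_vF i0 ε τ hf i0 y]
    simp [mul_assoc]
  rw [h1]
  have hdE : DifferentiableAt ℝ (EF i0 ε τ) x := (contDiff_EF i0 ε τ).differentiable (by simp) x
  have hda : DifferentiableAt ℝ (aF i0 ε) x := (contDiff_aF i0 ε).differentiable (by simp) x
  have hdv : DifferentiableAt ℝ (vF i0 ε τ f) x :=
    (contDiff_vF i0 ε τ hf).differentiable (by simp) x
  have hdf0 : DifferentiableAt ℝ (pd i0 f) x := (contDiff_pd hf i0).differentiable (by simp) x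
  rw [pd_add (((hda.fun_mul hdv).const_mul τ)) (hdE.fun_mul hdf0) i0,
    pd_const_mul (hda.fun_mul hdv) τ i0, pd_mul hda hdv i0,
    pd_mul hdE hdf0 i0, pd_aF, pd_EF]
  simp only [if_pos rfl]
  rw [pd_vF i0 ε τ hf i0 x]
  simp only [if_pos rfl, if_true]
  ring

lemma lap_vF (hf : ContDiff ℝ (⊤ : ℕ∞) f) (x : Fin n → ℝ) :
    lap (vF i0 ε τ f) x
      = EF i0 ε τ x * lap f x + τ * ε * vF i0 ε τ f x
        + τ * aF i0 ε x * pd i0 (vF i0 ε τ f) x + τ * aF i0 ε x * EF i0 ε τ x * pd i0 f x := by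
  unfold lap
  rw [← Finset.add_sum_erase Finset.univ _ (Finset.mem_univ i0),
    ← Finset.add_sum_erase Finset.univ (fun j => pd j (fun y => pd j f y) x) (Finset.mem_univ i0)]
  have h2 : ∀ j ∈ Finset.univ.erase i0,
      pd j (fun y => pd j (vF i0 ε τ f) y) x = EF i0 ε τ x * pd j (fun y => pd j f y) x := by
    intro j hj
    exact pd_pd_vF_ne i0 ε τ hf j (fun h => (Finset.mem_erase.1 hj).1 h.symm) x
  rw [Finset.sum_congr rfl h2, ← Finset.mul_sum]
  have h3 : pd i0 (fun y => pd i0 (vF i0 ε τ f) y) x = pd i0 (pd i0 (vF i0 ε τ f)) x := rfl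
  rw [h3, pd_pd_vF_eq i0 ε τ hf x]
  ring

end Conjugate


section Core

open MeasureTheory

variable {n : ℕ}

lemma pd_pd_zero_of_nmem {v : (Fin n → ℝ) → ℝ} {x : Fin n → ℝ} (hx : x ∉ tsupport v)
    (i j : Fin n) : pd i (pd j v) x = 0 :=
  pd_zero_of_nmem_tsupport (fun h => hx (tsupport_pd_subset j h))

lemma core (i0 : Fin n) {ε τ : ℝ} (hε : 0 ≤ ε) (hτ : 0 ≤ τ) {v : (Fin n → ℝ) → ℝ}
    (hv : ContDiff ℝ (⊤ : ℕ∞) v) (hvc : HasCompactSupport v) :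
    4*τ^3*ε * ∫ x, (aF i0 ε x * v x)^2
      ≤ ∫ x, (lap v x + τ^2*(aF i0 ε x)^2*v x
          + (-(2*τ*(aF i0 ε x * pd i0 v x)) - τ*ε*v x))^2 := by
  have hca : ContDiff ℝ (⊤ : ℕ∞) (aF i0 ε) := contDiff_aF i0 ε
  have hconta : Continuous (aF i0 ε) := hca.continuous
  have hcontv : Continuous v := hv.continuous
  have hpdc : ∀ j : Fin n, Continuous (pd j v) := fun j => continuous_pd hv j
  have hpdpdc : ∀ j : Fin n, Continuous (pd j (pd j v)) :=
    fun j => continuous_pd (contDiff_pd hv j) j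
  have hlapc : Continuous (lap v) := continuous_lap hv
  have hzv : ∀ x, x ∉ tsupport v → v x = 0 := fun x hx => image_eq_zero_of_notMem_tsupport hx
  have mk : ∀ (g : (Fin n → ℝ) → ℝ), Continuous g → (∀ x, x ∉ tsupport v → g x = 0) →
      Integrable g (volume : Measure (Fin n → ℝ)) := by
    intro g hg h0
    refine integ_cs hg (hvc.mono' ?_)
    intro x hx
    by_contra h
    exact hx (h0 x h)
  -- step 1 : ∫ v Δv = -∑ ∫ (∂_j v)²
  have hvlap : ∫ x, v x * lap v x = -∑ j : Fin n, ∫ x, (pd j v x)^2 := by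
    have e1 : (fun x => v x * lap v x) = fun x => ∑ j : Fin n, v x * pd j (pd j v) x := by
      funext x
      unfold lap
      rw [Finset.mul_sum]
    rw [e1, integral_finset_sum _ (fun j _ => mk _ (hcontv.fun_mul (hpdpdc j))
      (fun x hx => by rw [hzv x hx, zero_mul]))]
    rw [← Finset.sum_neg_distrib]
    exact Finset.sum_congr rfl (fun j _ => ibp_self hv hvc j)
  -- step 2 : ∫ a³ v ∂₀v = -(3ε/2) ∫ (a v)²
  have hcube : ∫ x, aF i0 ε x * aF i0 ε x * aF i0 ε x * (v x * pd i0 v x)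
      = -(3*ε/2) * ∫ x, (aF i0 ε x * v x)^2 := by
    have hF : ContDiff ℝ (⊤ : ℕ∞) (fun x => aF i0 ε x * aF i0 ε x * aF i0 ε x * v x) :=
      ((hca.mul hca).mul hca).mul hv
    have hFc : HasCompactSupport (fun x => aF i0 ε x * aF i0 ε x * aF i0 ε x * v x) :=
      hvc.mul_left
    have h := ibp hF hv hFc i0
    have e1 : (fun x => (aF i0 ε x * aF i0 ε x * aF i0 ε x * v x) * pd i0 v x)
        = fun x => aF i0 ε x * aF i0 ε x * aF i0 ε x * (v x * pd i0 v x) := by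
      funext x; ring
    have e2 : ∀ x, pd i0 (fun y => aF i0 ε y * aF i0 ε y * aF i0 ε y * v y) x
        = 3*ε*(aF i0 ε x * aF i0 ε x) * v x
          + aF i0 ε x * aF i0 ε x * aF i0 ε x * pd i0 v x := by
      intro x
      have hda : DifferentiableAt ℝ (aF i0 ε) x := hca.differentiable (by simp) x
      have hdv : DifferentiableAt ℝ v x := hv.differentiable (by simp) x
      rw [pd_mul ((hda.fun_mul hda).fun_mul hda) hdv i0]
      have := pd_aF_cube i0 ε i0 x
      rw [if_pos rfl] at this
      rw [show pd i0 (fun y => aF i0 ε y * aF i0 ε y * aF i0 ε y) x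
          = 3*ε*(aF i0 ε x * aF i0 ε x) from this]
    have e3 : (fun x => pd i0 (fun y => aF i0 ε y * aF i0 ε y * aF i0 ε y * v y) x * v x)
        = fun x => 3*ε*((aF i0 ε x * v x)^2)
            + aF i0 ε x * aF i0 ε x * aF i0 ε x * (v x * pd i0 v x) := by
      funext x
      rw [e2 x]
      ring
    rw [e1, e3] at h
    rw [integral_add
      (mk _ (continuous_const.fun_mul ((hconta.fun_mul hcontv).fun_pow 2))
        (fun x hx => by simp [hzv x hx]))
      (mk _ (((hconta.fun_mul hconta).fun_mul hconta).fun_mul (hcontv.fun_mul (hpdc i0)))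
        (fun x hx => by simp [hzv x hx]))] at h
    rw [integral_const_mul] at h
    linarith
  -- step 3 : ∫ a (∂_j v)(∂₀ ∂_j v) = -(ε/2) ∫ (∂_j v)²
  have hmix : ∀ j : Fin n, ∫ x, aF i0 ε x * (pd j v x * pd i0 (pd j v) x)
      = -(ε/2) * ∫ x, (pd j v x)^2 := by
    intro j
    have hcj : ContDiff ℝ (⊤ : ℕ∞) (pd j v) := contDiff_pd hv j
    have hF : ContDiff ℝ (⊤ : ℕ∞) (fun x => aF i0 ε x * pd j v x) := hca.mul hcj
    have hFc : HasCompactSupport (fun x => aF i0 ε x * pd j v x) :=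
      (hasCompactSupport_pd hvc j).mul_left
    have h := ibp hF hcj hFc i0
    have e1 : (fun x => (aF i0 ε x * pd j v x) * pd i0 (pd j v) x)
        = fun x => aF i0 ε x * (pd j v x * pd i0 (pd j v) x) := by
      funext x; ring
    have e2 : (fun x => pd i0 (fun y => aF i0 ε y * pd j v y) x * pd j v x)
        = fun x => ε * (pd j v x)^2 + aF i0 ε x * (pd j v x * pd i0 (pd j v) x) := by
      funext x
      have hda : DifferentiableAt ℝ (aF i0 ε) x := hca.differentiable (by simp) x
      have hdj : DifferentiableAt ℝ (pd j v) x := hcj.differentiable (by simp) x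
      rw [pd_mul hda hdj i0]
      have := pd_aF i0 ε i0 x
      rw [if_pos rfl] at this
      rw [this]
      ring
    rw [e1, e2] at h
    rw [integral_add
      (mk _ (continuous_const.fun_mul ((hpdc j).fun_pow 2))
        (fun x hx => by simp [pd_zero_of_nmem_tsupport hx]))
      (mk _ (hconta.fun_mul ((hpdc j).fun_mul (continuous_pd hcj i0)))
        (fun x hx => by simp [pd_zero_of_nmem_tsupport hx]))] at h
    rw [integral_const_mul] at h
    linarith
  -- step 4 : ∫ (a ∂₀v) ∂_j∂_j v
  have hIc : ∀ j : Fin n, ∫ x, (aF i0 ε x * pd i0 v x) * pd j (pd j v) x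
      = -(if i0 = j then ε * ∫ x, (pd i0 v x)^2 else 0) + (ε/2) * ∫ x, (pd j v x)^2 := by
    intro j
    have hc0 : ContDiff ℝ (⊤ : ℕ∞) (pd i0 v) := contDiff_pd hv i0
    have hcj : ContDiff ℝ (⊤ : ℕ∞) (pd j v) := contDiff_pd hv j
    have hF : ContDiff ℝ (⊤ : ℕ∞) (fun x => aF i0 ε x * pd i0 v x) := hca.mul hc0
    have hFc : HasCompactSupport (fun x => aF i0 ε x * pd i0 v x) :=
      (hasCompactSupport_pd hvc i0).mul_left
    have h := ibp hF hcj hFc j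
    have e2 : (fun x => pd j (fun y => aF i0 ε y * pd i0 v y) x * pd j v x)
        = fun x => (if i0 = j then ε * (pd i0 v x * pd j v x) else 0)
            + aF i0 ε x * (pd j v x * pd i0 (pd j v) x) := by
      funext x
      have hda : DifferentiableAt ℝ (aF i0 ε) x := hca.differentiable (by simp) x
      have hd0 : DifferentiableAt ℝ (pd i0 v) x := hc0.differentiable (by simp) x
      rw [pd_mul hda hd0 j, pd_aF, pd_comm hv j i0 x]
      by_cases hij : i0 = j <;> simp [hij] <;> ring
    by_cases hij : i0 = j
    · subst hij
      simp only [eq_self_iff_true, if_true] at e2 ⊢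
      rw [e2] at h
      rw [integral_add
        (mk _ (continuous_const.fun_mul ((hpdc i0).fun_mul (hpdc i0)))
          (fun x hx => by simp [pd_zero_of_nmem_tsupport hx]))
        (mk _ (hconta.fun_mul ((hpdc i0).fun_mul (continuous_pd hc0 i0)))
          (fun x hx => by simp [pd_zero_of_nmem_tsupport hx]))] at h
      rw [hmix i0] at h
      have e3 : (fun x => ε * (pd i0 v x * pd i0 v x)) = fun x => ε * (pd i0 v x)^2 := by
        funext x; ring
      rw [e3, integral_const_mul] at h
      linarith
    · simp only [hij, if_false, zero_add] at e2 ⊢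
      rw [e2] at h
      rw [hmix j] at h
      rw [neg_zero, zero_add]
      linarith
  -- step 5 : ∫ (a ∂₀v) Δv
  have hAk : ∫ x, (aF i0 ε x * pd i0 v x) * lap v x
      = -(ε * ∫ x, (pd i0 v x)^2) + (ε/2) * ∑ j : Fin n, ∫ x, (pd j v x)^2 := by
    have e1 : (fun x => (aF i0 ε x * pd i0 v x) * lap v x)
        = fun x => ∑ j : Fin n, (aF i0 ε x * pd i0 v x) * pd j (pd j v) x := by
      funext x
      unfold lap
      rw [Finset.mul_sum]
    rw [e1, integral_finset_sum _ (fun j _ => mk _ ((hconta.fun_mul (hpdc i0)).fun_mul (hpdpdc j))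
      (fun x hx => by simp [pd_zero_of_nmem_tsupport hx, pd_pd_zero_of_nmem hx]))]
    rw [Finset.sum_congr rfl (fun j _ => hIc j), Finset.sum_add_distrib, ← Finset.mul_sum,
      Finset.sum_neg_distrib, Finset.sum_ite_eq]
    simp
  -- step 6 : the cross term
  have hSA : ∫ x, ((lap v x + τ^2*(aF i0 ε x)^2*v x)
        * (-(2*τ*(aF i0 ε x * pd i0 v x)) - τ*ε*v x))
      = 2*τ*ε * (∫ x, (pd i0 v x)^2) + 2*τ^3*ε * (∫ x, (aF i0 ε x * v x)^2) := by
    have i1 : Integrable (fun x => -(2*τ) * ((aF i0 ε x * pd i0 v x) * lap v x))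
        (volume : Measure (Fin n → ℝ)) :=
      mk _ (continuous_const.mul ((hconta.mul (hpdc i0)).mul hlapc))
        (fun x hx => by simp [pd_zero_of_nmem_tsupport hx, lap_zero_of_nmem_tsupport hx])
    have i2 : Integrable (fun x => (-(τ*ε)) * (v x * lap v x))
        (volume : Measure (Fin n → ℝ)) :=
      mk _ (continuous_const.mul (hcontv.mul hlapc)) (fun x hx => by simp [hzv x hx])
    have i3 : Integrable (fun x => (-(2*τ^3))
        * (aF i0 ε x * aF i0 ε x * aF i0 ε x * (v x * pd i0 v x)))
        (volume : Measure (Fin n → ℝ)) :=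
      mk _ (continuous_const.mul ((((hconta.mul hconta).mul hconta)).mul
        (hcontv.mul (hpdc i0)))) (fun x hx => by simp [hzv x hx])
    have i4 : Integrable (fun x => (-(τ^3*ε)) * ((aF i0 ε x * v x)^2))
        (volume : Measure (Fin n → ℝ)) :=
      mk _ (continuous_const.mul ((hconta.mul hcontv).pow 2))
        (fun x hx => by simp [hzv x hx])
    have e1 : (fun x => (lap v x + τ^2*(aF i0 ε x)^2*v x)
          * (-(2*τ*(aF i0 ε x * pd i0 v x)) - τ*ε*v x))
        = fun x => (-(2*τ) * ((aF i0 ε x * pd i0 v x) * lap v x)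
            + (-(τ*ε)) * (v x * lap v x)
            + (-(2*τ^3)) * (aF i0 ε x * aF i0 ε x * aF i0 ε x * (v x * pd i0 v x)))
            + (-(τ^3*ε)) * ((aF i0 ε x * v x)^2) := by
      funext x; ring
    have i12 : Integrable (fun x => -(2*τ) * ((aF i0 ε x * pd i0 v x) * lap v x)
        + (-(τ*ε)) * (v x * lap v x)) (volume : Measure (Fin n → ℝ)) := i1.add i2
    have i123 : Integrable (fun x => -(2*τ) * ((aF i0 ε x * pd i0 v x) * lap v x)
        + (-(τ*ε)) * (v x * lap v x)
        + (-(2*τ^3)) * (aF i0 ε x * aF i0 ε x * aF i0 ε x * (v x * pd i0 v x)))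
        (volume : Measure (Fin n → ℝ)) := i12.add i3
    rw [e1, integral_add i123 i4, integral_add i12 i3,
      integral_add i1 i2, integral_const_mul, integral_const_mul, integral_const_mul,
      integral_const_mul, hAk, hvlap, hcube]
    ring
  -- step 7 : assembling
  have iS2 : Integrable (fun x => (lap v x + τ^2*(aF i0 ε x)^2*v x)^2)
      (volume : Measure (Fin n → ℝ)) :=
    mk _ ((hlapc.add ((continuous_const.mul (hconta.pow 2)).mul hcontv)).pow 2)
      (fun x hx => by simp [hzv x hx, lap_zero_of_nmem_tsupport hx])
  have iA2 : Integrable (fun x => (-(2*τ*(aF i0 ε x * pd i0 v x)) - τ*ε*v x)^2)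
      (volume : Measure (Fin n → ℝ)) :=
    mk _ (((continuous_const.mul (hconta.mul (hpdc i0))).neg.sub
        (continuous_const.mul hcontv)).pow 2)
      (fun x hx => by simp [hzv x hx, pd_zero_of_nmem_tsupport hx])
  have iSA : Integrable (fun x => 2 * ((lap v x + τ^2*(aF i0 ε x)^2*v x)
      * (-(2*τ*(aF i0 ε x * pd i0 v x)) - τ*ε*v x))) (volume : Measure (Fin n → ℝ)) :=
    mk _ (continuous_const.mul ((hlapc.add ((continuous_const.mul (hconta.pow 2)).mul
        hcontv)).mul ((continuous_const.mul (hconta.mul (hpdc i0))).neg.sub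
        (continuous_const.mul hcontv))))
      (fun x hx => by simp [hzv x hx, pd_zero_of_nmem_tsupport hx,
        lap_zero_of_nmem_tsupport hx])
  have esq : (fun x => (lap v x + τ^2*(aF i0 ε x)^2*v x
        + (-(2*τ*(aF i0 ε x * pd i0 v x)) - τ*ε*v x))^2)
      = fun x => ((lap v x + τ^2*(aF i0 ε x)^2*v x)^2
          + (-(2*τ*(aF i0 ε x * pd i0 v x)) - τ*ε*v x)^2)
          + 2 * ((lap v x + τ^2*(aF i0 ε x)^2*v x)
            * (-(2*τ*(aF i0 ε x * pd i0 v x)) - τ*ε*v x)) := by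
    funext x; ring
  have iS2A2 : Integrable (fun x => (lap v x + τ^2*(aF i0 ε x)^2*v x)^2
      + (-(2*τ*(aF i0 ε x * pd i0 v x)) - τ*ε*v x)^2) (volume : Measure (Fin n → ℝ)) :=
    iS2.add iA2
  rw [esq, integral_add iS2A2 iSA, integral_add iS2 iA2, integral_const_mul, hSA]
  have h1 : 0 ≤ ∫ x, (lap v x + τ^2*(aF i0 ε x)^2*v x)^2 :=
    integral_nonneg (fun x => sq_nonneg _)
  have h2 : 0 ≤ ∫ x, (-(2*τ*(aF i0 ε x * pd i0 v x)) - τ*ε*v x)^2 :=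
    integral_nonneg (fun x => sq_nonneg _)
  have h3 : 0 ≤ ∫ x, (pd i0 v x)^2 := integral_nonneg (fun x => sq_nonneg _)
  nlinarith [mul_nonneg (mul_nonneg hτ hε) h3]


lemma carleman (hn : 0 < n) (f V : (Fin n → ℝ) → ℝ) (hf : ContDiff ℝ (⊤ : ℕ∞) f)
    (hfc : HasCompactSupport f) (hV : Continuous V)
    (heq : ∀ x, lap f x = V x * f x) : f = 0 := by
  classical
  set i0 : Fin n := ⟨0, hn⟩ with hi0
  obtain ⟨r, hr⟩ := hfc.isBounded.subset_closedBall (0 : Fin n → ℝ)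
  set M := max r 1 with hMdef
  have hM0 : (0:ℝ) < M := lt_of_lt_of_le one_pos (le_max_right r 1)
  have hsupp : ∀ x ∈ tsupport f, |x i0| ≤ M := by
    intro x hx
    have h1 : ‖x‖ ≤ r := by simpa using hr hx
    have h2 : |x i0| ≤ ‖x‖ := by
      simpa [Real.norm_eq_abs] using norm_le_pi_norm x i0
    exact le_trans (le_trans h2 h1) (le_max_left r 1)
  set ε := 1/(2*M) with hεdef
  have hε : 0 < ε := by positivity
  have hεM : ε * M = 1/2 := by
    rw [hεdef]
    field_simp
  have haRange : ∀ x ∈ tsupport f, 1/2 ≤ aF i0 ε x := by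
    intro x hx
    have h1 := abs_le.1 (hsupp x hx)
    have h2 : -(ε*M) ≤ ε * x i0 := by nlinarith [h1.1]
    show 1/2 ≤ 1 + ε * x i0
    rw [hεM] at h2
    linarith
  obtain ⟨C, hC⟩ := hfc.exists_bound_of_continuousOn hV.continuousOn
  set Q := |C| with hQdef
  have hQ : ∀ x ∈ tsupport f, |V x| ≤ Q := fun x hx => le_trans (hC x hx) (le_abs_self C)
  have hQ0 : (0:ℝ) ≤ Q := abs_nonneg C
  set τ := max 1 ((Q^2+1)/ε) with hτdef
  have hτ1 : (1:ℝ) ≤ τ := le_max_left _ _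
  have hτ0 : (0:ℝ) ≤ τ := le_trans zero_le_one hτ1
  have hτQ : Q^2 < τ^3*ε := by
    have h1 : (Q^2+1)/ε ≤ τ := le_max_right _ _
    have h2 : Q^2+1 ≤ τ*ε := by
      rw [div_le_iff₀ hε] at h1
      linarith
    have h3 : 0 ≤ τ*ε*(τ^2-1) :=
      mul_nonneg (mul_nonneg hτ0 hε.le) (by nlinarith [hτ1])
    nlinarith [h2, h3]
  have hcv := contDiff_vF i0 ε τ hf
  have hvc := hasCompactSupport_vF i0 ε τ (f := f) hfc
  have hzv : ∀ x, x ∉ tsupport f → vF i0 ε τ f x = 0 := by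
    intro x hx
    show EF i0 ε τ x * f x = 0
    rw [image_eq_zero_of_notMem_tsupport hx, mul_zero]
  have mk : ∀ (g : (Fin n → ℝ) → ℝ), Continuous g → (∀ x, x ∉ tsupport f → g x = 0) →
      Integrable g (volume : Measure (Fin n → ℝ)) := by
    intro g hg h0
    refine integ_cs hg (hfc.mono' ?_)
    intro x hx
    by_contra h
    exact hx (h0 x h)
  have hcontv : Continuous (vF i0 ε τ f) := (contDiff_vF i0 ε τ hf).continuous
  have iv2 : Integrable (fun x => (vF i0 ε τ f x)^2) (volume : Measure (Fin n → ℝ)) :=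
    mk _ (hcontv.pow 2) (fun x hx => by simp [hzv x hx])
  have iVv2 : Integrable (fun x => (V x * vF i0 ε τ f x)^2) (volume : Measure (Fin n → ℝ)) :=
    mk _ ((hV.mul hcontv).pow 2) (fun x hx => by simp [hzv x hx])
  have iQv2 : Integrable (fun x => Q^2 * (vF i0 ε τ f x)^2) (volume : Measure (Fin n → ℝ)) :=
    mk _ (continuous_const.mul (hcontv.pow 2)) (fun x hx => by simp [hzv x hx])
  have iav2 : Integrable (fun x => (aF i0 ε x * vF i0 ε τ f x)^2)
      (volume : Measure (Fin n → ℝ)) :=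
    mk _ (((contDiff_aF i0 ε).continuous.mul hcontv).pow 2) (fun x hx => by simp [hzv x hx])
  -- the core estimate, with the PDE substituted in
  have hcore := core i0 hε.le hτ0 hcv hvc
  have hcancel : (fun x => (lap (vF i0 ε τ f) x + τ^2*(aF i0 ε x)^2*vF i0 ε τ f x
      + (-(2*τ*(aF i0 ε x * pd i0 (vF i0 ε τ f) x)) - τ*ε*vF i0 ε τ f x))^2)
      = fun x => (V x * vF i0 ε τ f x)^2 := by
    funext x
    have hp := pd_vF i0 ε τ hf i0 x
    rw [if_pos rfl] at hp
    rw [lap_vF i0 ε τ hf x, hp, heq x]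
    show (EF i0 ε τ x * (V x * f x) + τ*ε*(EF i0 ε τ x * f x)
        + τ * aF i0 ε x * (τ * aF i0 ε x * (EF i0 ε τ x * f x) + EF i0 ε τ x * pd i0 f x)
        + τ * aF i0 ε x * EF i0 ε τ x * pd i0 f x
        + τ^2*(aF i0 ε x)^2*(EF i0 ε τ x * f x)
        + (-(2*τ*(aF i0 ε x * (τ * aF i0 ε x * (EF i0 ε τ x * f x)
            + EF i0 ε τ x * pd i0 f x))) - τ*ε*(EF i0 ε τ x * f x)))^2
      = (V x * (EF i0 ε τ x * f x))^2
    ring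
  rw [hcancel] at hcore
  -- upper bound
  have hupper : ∫ x, (V x * vF i0 ε τ f x)^2 ≤ Q^2 * ∫ x, (vF i0 ε τ f x)^2 := by
    have hpt : ∀ x, (V x * vF i0 ε τ f x)^2 ≤ Q^2 * (vF i0 ε τ f x)^2 := by
      intro x
      by_cases hx : x ∈ tsupport f
      · have h1 := abs_le.1 (hQ x hx)
        have h2 : (V x)^2 ≤ Q^2 := sq_le_sq' h1.1 h1.2
        rw [mul_pow]
        exact mul_le_mul_of_nonneg_right h2 (sq_nonneg _)
      · simp [hzv x hx]
    calc ∫ x, (V x * vF i0 ε τ f x)^2 ≤ ∫ x, Q^2 * (vF i0 ε τ f x)^2 :=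
          integral_mono iVv2 iQv2 hpt
      _ = Q^2 * ∫ x, (vF i0 ε τ f x)^2 := integral_const_mul _ _
  -- lower bound
  have hlower : ∫ x, (vF i0 ε τ f x)^2 ≤ 4 * ∫ x, (aF i0 ε x * vF i0 ε τ f x)^2 := by
    have hpt : ∀ x, (vF i0 ε τ f x)^2 ≤ 4 * (aF i0 ε x * vF i0 ε τ f x)^2 := by
      intro x
      by_cases hx : x ∈ tsupport f
      · have h1 := haRange x hx
        have key : 0 ≤ (vF i0 ε τ f x)^2 * ((2*aF i0 ε x - 1)*(2*aF i0 ε x + 1)) :=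
          mul_nonneg (sq_nonneg _) (mul_nonneg (by linarith) (by linarith))
        nlinarith [key]
      · simp [hzv x hx]
    have i4 : Integrable (fun x => 4 * (aF i0 ε x * vF i0 ε τ f x)^2)
        (volume : Measure (Fin n → ℝ)) :=
      mk _ (continuous_const.mul (((contDiff_aF i0 ε).continuous.mul hcontv).pow 2))
        (fun x hx => by simp [hzv x hx])
    calc ∫ x, (vF i0 ε τ f x)^2 ≤ ∫ x, 4 * (aF i0 ε x * vF i0 ε τ f x)^2 :=
          integral_mono iv2 i4 hpt
      _ = 4 * ∫ x, (aF i0 ε x * vF i0 ε τ f x)^2 := integral_const_mul _ _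
  -- conclude ∫ v² = 0
  have hJnn : 0 ≤ ∫ x, (vF i0 ε τ f x)^2 := integral_nonneg (fun x => sq_nonneg _)
  have hJ : ∫ x, (vF i0 ε τ f x)^2 = 0 := by
    have hmul := mul_le_mul_of_nonneg_left hlower (by positivity : (0:ℝ) ≤ τ^3*ε)
    nlinarith [hcore, hupper, hmul, hτQ, hJnn]
  have hae : (fun x => (vF i0 ε τ f x)^2) =ᵐ[volume] 0 :=
    (integral_eq_zero_iff_of_nonneg (fun x => sq_nonneg _) iv2).1 hJ
  have hveq : (fun x => (vF i0 ε τ f x)^2) = 0 :=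
    (Continuous.ae_eq_iff_eq volume (hcontv.pow 2) continuous_const).1 hae
  funext x
  have h1 : (vF i0 ε τ f x)^2 = 0 := congrFun hveq x
  have h2 : vF i0 ε τ f x = 0 := by
    nlinarith [sq_nonneg (vF i0 ε τ f x)]
  have h3 : EF i0 ε τ x * f x = 0 := h2
  have h4 := (mul_eq_zero.1 h3).resolve_left (ne_of_gt (EF_pos i0 ε τ x))
  simpa using h4

end Core

end Stmt10Aux

open Stmt10Aux in
theorem stmt_10 {n : ℕ} (hn : 3 ≤ n)
    (γ : (Fin n → ℝ) → ℝ) (hγ : ContDiff ℝ (⊤ : ℕ∞) γ)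
    (c : ℝ) (hc : 0 < c) (hγc : ∀ x, c ≤ γ x)
    (hγ1 : HasCompactSupport (fun x => γ x - 1))
    (q : (Fin n → ℝ) → ℝ)
    (hq : ∀ x, q x = lap (fun y => Real.sqrt (γ y)) x / Real.sqrt (γ x))
    (f : (Fin n → ℝ) → ℝ) (hf : ContDiff ℝ (⊤ : ℕ∞) f) (hfc : HasCompactSupport f)
    (hfeq : ∀ x, lap f x - 3 * q x * f x = 0) :
    f = 0 := by
  have hγpos : ∀ x, 0 < γ x := fun x => lt_of_lt_of_le hc (hγc x)
  have hψ : ContDiff ℝ (⊤ : ℕ∞) (fun y => Real.sqrt (γ y)) := by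
    rw [contDiff_iff_contDiffAt]
    intro x
    exact (Real.contDiffAt_sqrt (ne_of_gt (hγpos x))).comp x hγ.contDiffAt
  have hψpos : ∀ x, 0 < Real.sqrt (γ x) := fun x => Real.sqrt_pos.2 (hγpos x)
  have hqc : Continuous q := by
    have : q = fun x => lap (fun y => Real.sqrt (γ y)) x / Real.sqrt (γ x) := funext hq
    rw [this]
    exact (Stmt10Aux.continuous_lap hψ).div (Real.continuous_sqrt.comp hγ.continuous)
      (fun x => ne_of_gt (hψpos x))
  have hV : Continuous (fun x => 3 * q x) := continuous_const.mul hqc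
  have heq : ∀ x, lap f x = (fun x => 3 * q x) x * f x := by
    intro x
    have := hfeq x
    simp only []
    linarith
  exact Stmt10Aux.carleman (lt_of_lt_of_le (by norm_num) hn) f (fun x => 3 * q x)
    hf hfc hV heq
end
end
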